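/- Let A be an incidence matrix of an S(2,μ,v) and I the v×v identity matrix. Then H = [I | A] is a parity-check matrix of a binary linear code of length v(v−1)/(μ(μ−1)) + v, dimension v(v−1)/(μ(μ−1)), girth 6, and minimum distance μ+1. -/

import Mathlib

private lemma zmod2_ne_zero {a : ZMod 2} (h : a ≠ 0) : a = 1 := by revert a; decide
private lemma zmod2_ne_one {a : ZMod 2} (h : a ≠ 1) : a = 0 := by revert a; decide
private lemma zmod2_add_eq_zero {a b : ZMod 2} (h : a + b = 0) : a = b := by revert a b; decide

private lemma count_lemma (μ v b : ℕ) (A : Matrix (Fin v) (Fin b) (ZMod 2))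
    (hcolw : ∀ j, (Finset.univ.filter fun i => A i j = 1).card = μ)
    (hpair : ∀ i i' : Fin v, i ≠ i' → ∃! j, A i j = 1 ∧ A i' j = 1) :
    b * (μ * μ - μ) = v * v - v := by
  classical
  set T : Finset ((Fin v × Fin v) × Fin b) :=
    Finset.univ.filter fun p => p.1.1 ≠ p.1.2 ∧ A p.1.1 p.2 = 1 ∧ A p.1.2 p.2 = 1 with hT
  have hcount1 : T.card = b * (μ * μ - μ) := by
    rw [Finset.card_eq_sum_card_fiberwise (f := Prod.snd) (t := Finset.univ)
      (fun x _ => Finset.mem_univ _)]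
    have hfib : ∀ j : Fin b, (T.filter fun p => p.2 = j).card = μ * μ - μ := by
      intro j
      have hbij : (T.filter fun p => p.2 = j).card =
          ((Finset.univ.filter fun i => A i j = 1).offDiag).card := by
        apply Finset.card_bij (fun p _ => p.1)
        · intro p hp
          simp only [hT, Finset.mem_filter, Finset.mem_univ, true_and] at hp
          obtain ⟨⟨hne, h1, h2⟩, hj⟩ := hp
          subst hj
          simp [Finset.mem_offDiag, hne, h1, h2]
        · intro p hp q hq hpq
          simp only [hT, Finset.mem_filter, Finset.mem_univ, true_and] at hp hq
          exact Prod.ext hpq (hp.2.trans hq.2.symm)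
        · intro a ha
          simp only [Finset.mem_offDiag, Finset.mem_filter, Finset.mem_univ, true_and] at ha
          exact ⟨(a, j), by simp [hT, ha.1, ha.2.1, ha.2.2], rfl⟩
      rw [hbij, Finset.offDiag_card, hcolw j]
    rw [Finset.sum_congr rfl fun j _ => hfib j, Finset.sum_const, Finset.card_univ,
      Fintype.card_fin, smul_eq_mul]
  have hcount2 : T.card = v * v - v := by
    rw [Finset.card_eq_sum_card_fiberwise (f := Prod.fst) (t := Finset.univ)
      (fun x _ => Finset.mem_univ _)]
    have hfib : ∀ q : Fin v × Fin v,
        (T.filter fun p => p.1 = q).card = if q.1 ≠ q.2 then 1 else 0 := by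
      intro q
      by_cases hq : q.1 ≠ q.2
      · rw [if_pos hq]
        obtain ⟨j, ⟨hj1, hj2⟩, huniq⟩ := hpair q.1 q.2 hq
        rw [Finset.card_eq_one]
        refine ⟨(q, j), ?_⟩
        ext p
        simp only [hT, Finset.mem_filter, Finset.mem_univ, true_and, Finset.mem_singleton]
        constructor
        · rintro ⟨⟨hne, h1, h2⟩, hpq⟩
          subst hpq
          exact Prod.ext rfl (huniq p.2 ⟨h1, h2⟩)
        · rintro rfl
          exact ⟨⟨hq, hj1, hj2⟩, rfl⟩
      · rw [if_neg hq, Finset.card_eq_zero]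
        ext p
        simp only [hT, Finset.mem_filter, Finset.mem_univ, true_and,
          Finset.notMem_empty, iff_false]
        rintro ⟨⟨hne, _, _⟩, rfl⟩
        exact hq hne
    rw [Finset.sum_congr rfl fun q _ => hfib q, Finset.sum_ite, Finset.sum_const,
      Finset.sum_const]
    have : (Finset.univ.filter fun q : Fin v × Fin v => q.1 ≠ q.2) =
        (Finset.univ : Finset (Fin v)).offDiag := by
      ext q; simp [Finset.mem_offDiag]
    simp [this, Finset.offDiag_card]
  omega

/-- Let A be an incidence matrix of an S(2,μ,v) (nontrivial: 2 ≤ μ < v) and I the v×v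
identity matrix. Then H = [I | A] is a parity-check matrix of a binary linear code of
length v(v−1)/(μ(μ−1)) + v, dimension v(v−1)/(μ(μ−1)) (i.e. b = v(v−1)/(μ(μ−1)) and
H has full row rank v), girth 6 (no 4-cycle but some 6-cycle in the Tanner graph),
and minimum distance μ+1. -/
theorem stmt_7 (μ v b : ℕ) (hμ : 2 ≤ μ) (hμv : μ < v)
    (A : Matrix (Fin v) (Fin b) (ZMod 2))
    (hcolw : ∀ j, (Finset.univ.filter fun i => A i j = 1).card = μ)
    (hpair : ∀ i i' : Fin v, i ≠ i' → ∃! j, A i j = 1 ∧ A i' j = 1)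
    (H : Matrix (Fin v) (Fin v ⊕ Fin b) (ZMod 2))
    (hH : H = Matrix.fromCols 1 A) :
    b = v * (v - 1) / (μ * (μ - 1)) ∧
    H.rank = v ∧
    (¬ ∃ (i₁ i₂ : Fin v) (j₁ j₂ : Fin v ⊕ Fin b), i₁ ≠ i₂ ∧ j₁ ≠ j₂ ∧
        H i₁ j₁ = 1 ∧ H i₁ j₂ = 1 ∧ H i₂ j₁ = 1 ∧ H i₂ j₂ = 1) ∧
    (∃ (i₁ i₂ i₃ : Fin v) (j₁ j₂ j₃ : Fin v ⊕ Fin b),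
        [i₁, i₂, i₃].Pairwise (· ≠ ·) ∧ [j₁, j₂, j₃].Pairwise (· ≠ ·) ∧
        H i₁ j₁ = 1 ∧ H i₂ j₁ = 1 ∧ H i₂ j₂ = 1 ∧
        H i₃ j₂ = 1 ∧ H i₃ j₃ = 1 ∧ H i₁ j₃ = 1) ∧
    IsLeast {w : ℕ | ∃ x : (Fin v ⊕ Fin b) → ZMod 2, x ≠ 0 ∧ H.mulVec x = 0 ∧
      w = (Finset.univ.filter fun j => x j ≠ 0).card} (μ + 1) := by
  classical
  subst hH
  have hcnt := count_lemma μ v b A hcolw hpair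
  have hμμ : 0 < μ * μ - μ := by nlinarith [Nat.sub_add_cancel (Nat.le_mul_of_pos_left μ (by omega) : μ ≤ μ * μ)]
  have hvv : 0 < v * v - v := by
    have : v < v * v := by nlinarith
    omega
  have hb : 0 < b := by
    rcases Nat.eq_zero_or_pos b with h | h
    · rw [h, zero_mul] at hcnt; omega
    · exact h
  -- helper: entries of H
  have hid1 : ∀ i k : Fin v, (Matrix.fromCols 1 A : Matrix (Fin v) (Fin v ⊕ Fin b) (ZMod 2))
      i (Sum.inl k) = 1 → i = k := by
    intro i k h
    rw [Matrix.fromCols_apply_inl] at h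
    by_contra hne
    rw [Matrix.one_apply_ne hne] at h
    exact one_ne_zero h.symm
  have hAentry : ∀ (i : Fin v) (j : Fin b),
      (Matrix.fromCols 1 A : Matrix (Fin v) (Fin v ⊕ Fin b) (ZMod 2)) i (Sum.inr j) = A i j :=
    fun i j => Matrix.fromCols_apply_inr _ _ _ _
  refine ⟨?_, ?_, ?_, ?_, ?_, ?_⟩
  · -- b = v(v-1)/(μ(μ-1))
    have h1 : μ * (μ - 1) = μ * μ - μ := by rw [← Nat.mul_pred]; rfl
    have h2 : v * (v - 1) = v * v - v := by rw [← Nat.mul_pred]; rfl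
    rw [h1, h2]
    exact (Nat.div_eq_of_eq_mul_left hμμ hcnt.symm).symm
  · -- rank
    have hsurj : Function.Surjective (Matrix.fromCols 1 A :
        Matrix (Fin v) (Fin v ⊕ Fin b) (ZMod 2)).mulVecLin := by
      intro y
      refine ⟨Sum.elim y 0, ?_⟩
      rw [Matrix.mulVecLin_apply, Matrix.fromCols_mulVec_sumElim, Matrix.one_mulVec,
        Matrix.mulVec_zero, add_zero]
    rw [Matrix.rank, LinearMap.range_eq_top.mpr hsurj, finrank_top,
      Module.finrank_fintype_fun_eq_card, Fintype.card_fin]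
  · -- no 4-cycle
    rintro ⟨i₁, i₂, j₁, j₂, hi, hj, h11, h12, h21, h22⟩
    rcases j₁ with k₁ | k₁
    · exact hi ((hid1 i₁ k₁ h11).trans (hid1 i₂ k₁ h21).symm)
    rcases j₂ with k₂ | k₂
    · exact hi ((hid1 i₁ k₂ h12).trans (hid1 i₂ k₂ h22).symm)
    rw [hAentry] at h11 h12 h21 h22
    obtain ⟨j, _, huniq⟩ := hpair i₁ i₂ hi
    exact hj (by rw [huniq k₁ ⟨h11, h21⟩, huniq k₂ ⟨h12, h22⟩])
  · -- 6-cycle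
    have hv3 : 3 ≤ v := by omega
    set i₁ : Fin v := ⟨0, by omega⟩
    set i₂ : Fin v := ⟨1, by omega⟩
    have h12 : i₁ ≠ i₂ := by simp [i₁, i₂, Fin.ext_iff]
    obtain ⟨j₁, ⟨hj1a, hj1b⟩, hu1⟩ := hpair i₁ i₂ h12
    -- find i₃ not in block j₁
    have hex : ∃ i₃ : Fin v, A i₃ j₁ ≠ 1 := by
      by_contra h
      push_neg at h
      have heq : (Finset.univ.filter fun i => A i j₁ = 1) = Finset.univ := by
        ext i; simp [h i]
      have hcc := hcolw j₁
      rw [heq, Finset.card_univ, Fintype.card_fin] at hcc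
      omega
    obtain ⟨i₃, hi₃⟩ := hex
    have h13 : i₁ ≠ i₃ := fun h => hi₃ (h ▸ hj1a)
    have h23 : i₂ ≠ i₃ := fun h => hi₃ (h ▸ hj1b)
    obtain ⟨j₂, ⟨hj2a, hj2b⟩, hu2⟩ := hpair i₂ i₃ h23
    obtain ⟨j₃, ⟨hj3a, hj3b⟩, hu3⟩ := hpair i₃ i₁ (Ne.symm h13)
    have hj12 : j₁ ≠ j₂ := fun h => hi₃ (h ▸ hj2b)
    have hj13 : j₁ ≠ j₃ := fun h => hi₃ (h ▸ hj3a)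
    have hj23 : j₂ ≠ j₃ := by
      intro h
      subst h
      exact hj12 (hu1 j₂ ⟨hj3b, hj2a⟩).symm
    refine ⟨i₁, i₂, i₃, Sum.inr j₁, Sum.inr j₂, Sum.inr j₃, ?_, ?_, ?_, ?_, ?_, ?_, ?_, ?_⟩
    · simp [h12, h13, h23]
    · simp [hj12, hj13, hj23]
    · rw [hAentry]; exact hj1a
    · rw [hAentry]; exact hj1b
    · rw [hAentry]; exact hj2a
    · rw [hAentry]; exact hj2b
    · rw [hAentry]; exact hj3a
    · rw [hAentry]; exact hj3b
  · -- membership : a word of weight μ+1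
    set j₀ : Fin b := ⟨0, hb⟩
    refine ⟨Sum.elim (fun i => A i j₀) (Pi.single j₀ 1), ?_, ?_, ?_⟩
    · intro h
      have := congrFun h (Sum.inr j₀)
      simp at this
    · rw [Matrix.fromCols_mulVec_sumElim, Matrix.one_mulVec]
      have : A.mulVec (Pi.single j₀ 1) = fun i => A i j₀ := by
        ext i; rw [Matrix.mulVec_single]; simp
      rw [this]
      ext i
      simp [CharTwo.add_self_eq_zero]
    · rw [← Finset.card_toLeft_add_card_toRight]
      have hL : (Finset.univ.filter fun j : Fin v ⊕ Fin b =>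
          Sum.elim (fun i => A i j₀) (Pi.single j₀ 1) j ≠ 0).toLeft =
          Finset.univ.filter fun i => A i j₀ = 1 := by
        ext i
        simp only [Finset.mem_toLeft, Finset.mem_filter, Finset.mem_univ, true_and,
          Sum.elim_inl]
        exact ⟨fun h => zmod2_ne_zero h, fun h => by rw [h]; exact one_ne_zero⟩
      have hR : (Finset.univ.filter fun j : Fin v ⊕ Fin b =>
          Sum.elim (fun i => A i j₀) (Pi.single j₀ 1) j ≠ 0).toRight = {j₀} := by
        ext j
        simp only [Finset.mem_toRight, Finset.mem_filter, Finset.mem_univ, true_and,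
          Sum.elim_inr, Finset.mem_singleton]
        rw [Pi.single_apply]
        by_cases h : j = j₀ <;> simp [h]
      rw [hL, hR, hcolw, Finset.card_singleton]
  · -- lower bound
    rintro w ⟨x, hx0, hxH, hw⟩
    set y : Fin v → ZMod 2 := fun i => x (Sum.inl i) with hy
    set z : Fin b → ZMod 2 := fun j => x (Sum.inr j) with hz
    have hxe : x = Sum.elim y z := funext fun s => by cases s <;> rfl
    rw [hxe, Matrix.fromCols_mulVec_sumElim, Matrix.one_mulVec] at hxH
    have hyA : ∀ i, y i = A.mulVec z i := fun i => zmod2_add_eq_zero (congrFun hxH i)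
    set S : Finset (Fin b) := Finset.univ.filter fun j => z j ≠ 0 with hS
    set T : Finset (Fin v) := Finset.univ.filter fun i => y i ≠ 0 with hT
    have hwTS : w = T.card + S.card := by
      have hL : (Finset.univ.filter fun j : Fin v ⊕ Fin b => x j ≠ 0).toLeft = T := by
        ext i; simp [hxe, hT]
      have hR : (Finset.univ.filter fun j : Fin v ⊕ Fin b => x j ≠ 0).toRight = S := by
        ext j; simp [hxe, hS]
      rw [hw, ← Finset.card_toLeft_add_card_toRight, hL, hR]
    have hSne : S.Nonempty := by
      rw [Finset.nonempty_iff_ne_empty]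
      intro hSe
      apply hx0
      have hz0 : z = 0 := by
        funext j
        simp only [Pi.zero_apply]
        by_contra h
        have : j ∈ S := by simp [hS, h]
        simp [hSe] at this
      have hy0 : y = 0 := by
        funext i
        rw [hyA i, hz0, Matrix.mulVec_zero]
      rw [hxe, hy0, hz0, Sum.elim_zero_zero]
    obtain ⟨j₀, hj₀S⟩ := hSne
    have hzj₀ : z j₀ = 1 := zmod2_ne_zero (by simpa [hS] using hj₀S)
    set P : Finset (Fin v) := Finset.univ.filter fun i => A i j₀ = 1 with hPdef
    have hPcard : P.card = μ := hcolw j₀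
    set P0 : Finset (Fin v) := P.filter fun i => y i = 0 with hP0
    set P1 : Finset (Fin v) := P.filter fun i => ¬ (y i = 0) with hP1
    have hsplit : P0.card + P1.card = P.card := Finset.card_filter_add_card_filter_not _
    have hP1T : P1 ⊆ T := by
      intro i hi
      simp only [hP1, Finset.mem_filter] at hi
      simp [hT, hi.2]
    have hkey : ∀ i ∈ P0, ∃ j ∈ S.erase j₀, A i j = 1 := by
      intro i hi
      simp only [hP0, hPdef, Finset.mem_filter, Finset.mem_univ, true_and] at hi
      obtain ⟨hiP, hiy⟩ := hi
      have hsum : ∑ j ∈ S, A i j = 0 := by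
        have h1 : A.mulVec z i = ∑ j, A i j * z j := rfl
        have h2 : ∑ j, A i j * z j = ∑ j ∈ S, A i j * z j := by
          symm
          apply Finset.sum_subset (Finset.subset_univ S)
          intro j _ hjS
          have : z j = 0 := by
            by_contra h; exact hjS (by simp [hS, h])
          rw [this, mul_zero]
        have h3 : ∑ j ∈ S, A i j * z j = ∑ j ∈ S, A i j := by
          apply Finset.sum_congr rfl
          intro j hjS
          have hzj : z j = 1 := zmod2_ne_zero (by simpa [hS] using hjS)
          rw [hzj, mul_one]
        rw [← h3, ← h2, ← h1, ← hyA i, hiy]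
      by_contra hcon
      push_neg at hcon
      have hrest : ∑ j ∈ S.erase j₀, A i j = 0 := by
        apply Finset.sum_eq_zero
        intro j hj
        exact zmod2_ne_one (hcon j hj)
      rw [← Finset.add_sum_erase S _ hj₀S, hiP, hrest, add_zero] at hsum
      exact one_ne_zero hsum
    have hinj : P0.card ≤ (S.erase j₀).card := by
      apply Finset.card_le_card_of_injOn
        (fun i => if h : i ∈ P0 then (hkey i h).choose else j₀)
      · intro i hi
        simp only [Finset.mem_coe] at hi ⊢
        simp only [hi, dif_pos]
        exact (hkey i hi).choose_spec.1
      · intro i hi i' hi' hf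
        simp only [Finset.mem_coe] at hi hi'
        have hf' : (if h : i ∈ P0 then (hkey i h).choose else j₀) =
            (if h : i' ∈ P0 then (hkey i' h).choose else j₀) := hf
        rw [dif_pos hi, dif_pos hi'] at hf'
        by_contra hne
        have hj1 : (hkey i hi).choose ∈ S.erase j₀ := (hkey i hi).choose_spec.1
        have hj2 : A i (hkey i hi).choose = 1 := (hkey i hi).choose_spec.2
        have hj3 : A i' (hkey i hi).choose = 1 := by
          rw [hf']; exact (hkey i' hi').choose_spec.2
        have hjne : (hkey i hi).choose ≠ j₀ := Finset.ne_of_mem_erase hj1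
        have hiP : A i j₀ = 1 ∧ y i = 0 := by simpa [hP0, hPdef] using hi
        have hiP' : A i' j₀ = 1 ∧ y i' = 0 := by simpa [hP0, hPdef] using hi'
        obtain ⟨jb, _, huniq⟩ := hpair i i' hne
        exact hjne ((huniq _ ⟨hj2, hj3⟩).trans (huniq j₀ ⟨hiP.1, hiP'.1⟩).symm)
    rw [Finset.card_erase_of_mem hj₀S] at hinj
    have hScard : 1 ≤ S.card := Finset.card_pos.mpr ⟨j₀, hj₀S⟩
    have hP1T' : P1.card ≤ T.card := Finset.card_le_card hP1T
    omega
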